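/- Let β_1 > 0, β_2 ≥ 0, and let t* = inf{t ≥ 0 : β_1 + 2β_2 t + log(1-t) < 0} ∈ [0,1). Let F: [0,1] → [0,1] be the probability generating function of the Borel(2β_2) distribution, characterized as the minimal solution of F(s) = s·exp(2β_2(F(s) - 1)). Then F(e^{-β_1}) = 1 - t*. -/

import Mathlib

open Real Set

/-- Let `β₁ > 0`, `β₂ ≥ 0` and `t* = inf {t ≥ 0 : β₁ + 2β₂ t + log(1-t) < 0} ∈ [0,1)`.
If `F` is the probability generating function of the Borel(2β₂) distribution,
characterized on `[0,1]` as the minimal solution in `[0,1]` of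
`F(s) = s exp(2β₂ (F(s) - 1))`, then `F(e^{-β₁}) = 1 - t*`. -/
theorem borel_pgf_at_exp_neg_beta_one
    (β₁ β₂ : ℝ) (hβ₁ : 0 < β₁) (hβ₂ : 0 ≤ β₂)
    (tstar : ℝ)
    (htstar : tstar = sInf {t : ℝ | 0 ≤ t ∧ β₁ + 2 * β₂ * t + Real.log (1 - t) < 0})
    (hts : tstar ∈ Ico (0 : ℝ) 1)
    (F : ℝ → ℝ)
    (hF : ∀ s ∈ Icc (0 : ℝ) 1,
      F s ∈ Icc (0 : ℝ) 1 ∧ F s = s * Real.exp (2 * β₂ * (F s - 1)) ∧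
        ∀ x ∈ Icc (0 : ℝ) 1, x = s * Real.exp (2 * β₂ * (x - 1)) → F s ≤ x) :
    F (Real.exp (-β₁)) = 1 - tstar := by
  obtain ⟨hts0, hts1⟩ := hts
  set S := {t : ℝ | 0 ≤ t ∧ β₁ + 2 * β₂ * t + Real.log (1 - t) < 0} with hSdef
  have hbdd : BddBelow S := ⟨0, fun t ht => ht.1⟩
  have hne : S.Nonempty := by
    refine ⟨1 - Real.exp (-(β₁ + 2*β₂ + 1)), ?_, ?_⟩
    · have : Real.exp (-(β₁ + 2*β₂ + 1)) ≤ 1 := Real.exp_le_one_iff.2 (by linarith)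
      linarith
    · have h1 : (1 : ℝ) - (1 - Real.exp (-(β₁ + 2*β₂ + 1))) = Real.exp (-(β₁ + 2*β₂ + 1)) := by ring
      rw [h1, Real.log_exp]
      nlinarith [Real.exp_pos (-(β₁ + 2*β₂ + 1)), Real.exp_le_one_iff.2 (show -(β₁ + 2*β₂ + 1) ≤ 0 by linarith)]
  -- tstar > 0
  have hlb : ∀ t ∈ S, 1 - Real.exp (-β₁) ≤ t := by
    intro t ht
    by_contra h
    push_neg at h
    have h1t : Real.exp (-β₁) ≤ 1 - t := by linarith
    have hlog : -β₁ ≤ Real.log (1 - t) := by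
      have := Real.log_le_log (Real.exp_pos _) h1t
      simpa [Real.log_exp] using this
    have h2 : 0 ≤ 2 * β₂ * t := mul_nonneg (by linarith) ht.1
    nlinarith [ht.2]
  have ht0 : 0 < tstar := by
    have h1 : 1 - Real.exp (-β₁) ≤ tstar := htstar ▸ le_csInf hne hlb
    have h2 : Real.exp (-β₁) < 1 := Real.exp_lt_one_iff.2 (by linarith)
    linarith
  -- continuity
  have hcont : ∀ t : ℝ, t < 1 → ContinuousAt (fun t => β₁ + 2 * β₂ * t + Real.log (1 - t)) t := by
    intro t ht
    have h1 : ContinuousAt (fun t : ℝ => Real.log (1 - t)) t :=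
      (Real.continuousAt_log (by linarith)).comp (continuousAt_const.sub continuousAt_id)
    exact (continuousAt_const.add (continuousAt_const.mul continuousAt_id)).add h1
  -- g(tstar) ≤ 0
  have hgle : β₁ + 2 * β₂ * tstar + Real.log (1 - tstar) ≤ 0 := by
    by_contra h
    push_neg at h
    have hev := (hcont tstar hts1).eventually (eventually_gt_nhds h)
    obtain ⟨δ, hδ, hball⟩ := Metric.eventually_nhds_iff.1 hev
    obtain ⟨t, htS, htlt⟩ := exists_lt_of_csInf_lt hne (show sInf S < tstar + δ by rw [← htstar]; linarith)
    have hget : tstar ≤ t := htstar ▸ csInf_le hbdd htS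
    have hd : dist t tstar < δ := by rw [Real.dist_eq, abs_lt]; constructor <;> linarith
    have := hball hd
    have := htS.2
    linarith
  -- g(tstar) ≥ 0
  have hgge : 0 ≤ β₁ + 2 * β₂ * tstar + Real.log (1 - tstar) := by
    by_contra h
    push_neg at h
    have hev := (hcont tstar hts1).eventually (eventually_lt_nhds h)
    obtain ⟨δ, hδ, hball⟩ := Metric.eventually_nhds_iff.1 hev
    have hr0 : 0 < min (δ/2) (tstar/2) := lt_min (by linarith) (by linarith)
    have hmem : tstar - min (δ/2) (tstar/2) ∈ S := by
      constructor
      · have : min (δ/2) (tstar/2) ≤ tstar/2 := min_le_right _ _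
        linarith
      · apply hball
        rw [Real.dist_eq, abs_lt]
        have : min (δ/2) (tstar/2) ≤ δ/2 := min_le_left _ _
        constructor <;> linarith
    have h2 := csInf_le hbdd hmem
    rw [← htstar] at h2
    linarith
  have hgz : β₁ + 2 * β₂ * tstar + Real.log (1 - tstar) = 0 := le_antisymm hgle hgge
  -- facts about s = exp(-β₁)
  have hs : Real.exp (-β₁) ∈ Icc (0:ℝ) 1 :=
    ⟨(Real.exp_pos _).le, Real.exp_le_one_iff.2 (by linarith)⟩
  obtain ⟨hFm, hFe, hFmin⟩ := hF _ hs
  set x := F (Real.exp (-β₁)) with hxdef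
  -- upper bound : x ≤ 1 - tstar
  have hx1pos : 0 < 1 - tstar := by linarith
  have heq : (1 - tstar) = Real.exp (-β₁) * Real.exp (2 * β₂ * ((1 - tstar) - 1)) := by
    have h3 : (2:ℝ) * β₂ * ((1 - tstar) - 1) = -(2 * β₂ * tstar) := by ring
    rw [← Real.exp_add, show -β₁ + 2 * β₂ * ((1 - tstar) - 1) = Real.log (1 - tstar) from by rw [h3]; linarith]
    exact (Real.exp_log hx1pos).symm
  have hup : x ≤ 1 - tstar := hFmin _ ⟨by linarith, by linarith⟩ heq
  -- lower bound
  have hxpos : 0 < x := by rw [hFe]; positivity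
  have hlogx : Real.log x = -β₁ + 2 * β₂ * (x - 1) := by
    conv_lhs => rw [hFe]
    rw [Real.log_mul (Real.exp_ne_zero _) (Real.exp_ne_zero _), Real.log_exp, Real.log_exp]
  have hge : 1 - tstar ≤ x := by
    by_contra hcon
    push_neg at hcon
    have htF : tstar < 1 - x := by linarith
    have htFpos : 0 < 1 - x := lt_trans ht0 htF
    have ha : 0 < (1 - x - tstar) / (1 - x) := div_pos (by linarith) htFpos
    have hb : 0 < tstar / (1 - x) := div_pos ht0 htFpos
    have hab : (1 - x - tstar) / (1 - x) + tstar / (1 - x) = 1 := by field_simp; ring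
    have hne1 : (1:ℝ) ≠ x := by intro hh; rw [← hh] at htFpos; linarith
    have hcc := strictConcaveOn_log_Ioi.2 (mem_Ioi.2 one_pos) (mem_Ioi.2 hxpos) hne1 ha hb hab
    simp only [smul_eq_mul, Real.log_one] at hcc
    have hcomb : (1 - x - tstar) / (1 - x) * 1 + tstar / (1 - x) * x = 1 - tstar := by
      field_simp; ring
    rw [hcomb] at hcc
    have hcc' : tstar / (1 - x) * Real.log x < Real.log (1 - tstar) := by linarith
    have hcc2 : tstar * Real.log x < Real.log (1 - tstar) * (1 - x) := by
      rw [div_mul_eq_mul_div, div_lt_iff₀ htFpos] at hcc'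
      exact hcc'
    rw [hlogx] at hcc2
    have hlts : Real.log (1 - tstar) = -β₁ - 2 * β₂ * tstar := by linarith
    rw [hlts] at hcc2
    nlinarith [mul_lt_mul_of_pos_left htF hβ₁]
  linarith
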